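/- Let F : ℂ³ → ℂ² be the polynomial map F(x,y,z) = (x, [(x−1)(xz+y²)+1]·[x(xz+y²)−1]). For every b ∈ ℂ with b ≠ −1, F^{-1}(0,b) = {(0,d,z) ∈ ℂ³ : z ∈ ℂ, d² = 1+b}, which is the union of the two disjoint complex lines {(0,d₁)} × ℂ and {(0,d₂)} × ℂ, where d₁, d₂ are the two distinct square roots of 1+b. In particular F^{-1}(0,b) has exactly two connected components, each biholomorphic to ℂ. -/

import Mathlib

open Filter Set Topology

noncomputable section

/-- The singular chain complex of a topological space, with `ℚ` coefficients:
the alternating face map complex of the free simplicial `ℚ`-module on the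
singular simplicial set. -/
def singularChainComplex (X : Type) [TopologicalSpace X] : ChainComplex (ModuleCat ℚ) ℕ :=
  (AlgebraicTopology.alternatingFaceMapComplex (ModuleCat ℚ)).obj
    (((CategoryTheory.SimplicialObject.whiskering (Type) (ModuleCat ℚ)).obj
      (ModuleCat.free ℚ)).obj (TopCat.toSSet.obj (TopCat.of X)))

/-- Singular homology of a topological space with `ℚ` coefficients. -/
def singularHomology (X : Type) [TopologicalSpace X] (i : ℕ) : ModuleCat ℚ :=
  (singularChainComplex X).homology i

/-- The `i`-th Betti number: the dimension over `ℚ` of the `i`-th singular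
homology with `ℚ` coefficients. -/
def bettiNumber (X : Type) [TopologicalSpace X] (i : ℕ) : ℕ :=
  Module.finrank ℚ (singularHomology X i)

/-- The `i`-th Betti number is finite. -/
def FiniteBetti (X : Type) [TopologicalSpace X] (i : ℕ) : Prop :=
  FiniteDimensional ℚ (singularHomology X i)

/-- `Φ` and `Ψ` give mutually inverse smooth maps between `S ⊆ E` and `T ⊆ F`,
i.e. a diffeomorphism between `S` and `T` (smoothness of a map on a subset is
expressed via `ContDiffOn`). -/
def IsDiffeoOn {E F : Type} [NormedAddCommGroup E] [NormedSpace ℝ E]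
    [NormedAddCommGroup F] [NormedSpace ℝ F]
    (Φ : E → F) (Ψ : F → E) (S : Set E) (T : Set F) : Prop :=
  ContDiffOn ℝ ⊤ Φ S ∧ ContDiffOn ℝ ⊤ Ψ T ∧ Set.MapsTo Φ S T ∧ Set.MapsTo Ψ T S ∧
    Set.LeftInvOn Ψ Φ S ∧ Set.RightInvOn Ψ Φ T

/-- `S` and `T` are diffeomorphic. -/
def DiffeoEquiv {E F : Type} [NormedAddCommGroup E] [NormedSpace ℝ E]
    [NormedAddCommGroup F] [NormedSpace ℝ F] (S : Set E) (T : Set F) : Prop :=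
  ∃ Φ Ψ, IsDiffeoOn Φ Ψ S T

/-- The restriction of `p` to `M` is a trivial smooth fibration over `D` with fibre
`p⁻¹(lam) ∩ M`: there is a diffeomorphism `Φ : M ∩ p⁻¹(D) → D × (M ∩ p⁻¹(lam))`
with `pr₁ ∘ Φ = p`. -/
def IsSmoothTrivialFibrationOn {E F : Type} [NormedAddCommGroup E] [NormedSpace ℝ E]
    [NormedAddCommGroup F] [NormedSpace ℝ F]
    (p : E → F) (M : Set E) (D : Set F) (lam : F) : Prop :=
  ∃ Φ : E → F × E, ∃ Ψ : F × E → E,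
    IsDiffeoOn Φ Ψ (M ∩ p ⁻¹' D) (D ×ˢ (M ∩ p ⁻¹' {lam})) ∧
    ∀ x ∈ M ∩ p ⁻¹' D, (Φ x).1 = p x

/-- `lam` is not a bifurcation value of `p : M → B`. -/
def IsNotBifurcationValueOn {E F : Type} [NormedAddCommGroup E] [NormedSpace ℝ E]
    [NormedAddCommGroup F] [NormedSpace ℝ F]
    (p : E → F) (M : Set E) (B : Set F) (lam : F) : Prop :=
  ∃ D : Set F, IsOpen D ∧ lam ∈ D ∧ D ⊆ B ∧ IsSmoothTrivialFibrationOn p M D lam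

/-- `g : V → ℂᵏ` is a holomorphic local defining function for `M` at `x`, with
surjective derivative at every point of its zero set. -/
def IsLocalDefiningFunction {E : Type} [NormedAddCommGroup E] [NormedSpace ℂ E]
    (k : ℕ) (M : Set E) (x : E) (V : Set E) (g : E → (Fin k → ℂ)) : Prop :=
  IsOpen V ∧ x ∈ V ∧ DifferentiableOn ℂ g V ∧
    (∀ y ∈ V, g y = 0 → Function.Surjective (fderiv ℂ g y)) ∧
    M ∩ V = {y ∈ V | g y = 0}

/-- `M ⊆ ℂᴺ` is a (Stein) closed complex submanifold of complex dimension `m`: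
it is closed and near each of its points it is the zero set of a holomorphic
submersion to `ℂ^{N-m}`. -/
def IsSteinSubmanifold (N m : ℕ) (M : Set (Fin N → ℂ)) : Prop :=
  IsClosed M ∧ ∀ x ∈ M, ∃ V g, IsLocalDefiningFunction (N - m) M x V g

/-- A holomorphic map `p` (defined near `M`) is a submersion at `x ∈ M`: its
derivative maps the tangent space `T_x M = ker (d_x g)` onto the target, where
`g` is a local defining function of `M` near `x` (of codimension `k`). -/
def SubmersionAt {E F : Type} [NormedAddCommGroup E] [NormedSpace ℂ E]
    [NormedAddCommGroup F] [NormedSpace ℂ F]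
    (k : ℕ) (M : Set E) (p : E → F) (x : E) : Prop :=
  ∃ V g, IsLocalDefiningFunction k M x V g ∧
    Submodule.map (fderiv ℂ p x).toLinearMap
      (LinearMap.ker (fderiv ℂ g x).toLinearMap) = ⊤

/-- A connected component of the fibres of `p : M → B` vanishes at infinity as
`t → lam`: there are `t k → lam` in `B` and connected components
`C k = connectedComponentIn (M ∩ p⁻¹(t k)) (x k)` of the fibres over `t k`
which eventually miss every compact subset. -/
def HasVanishingComponentAtInfinity {E F : Type} [TopologicalSpace E] [TopologicalSpace F]
    (M : Set E) (p : E → F) (B : Set F) (lam : F) : Prop :=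
  ∃ t : ℕ → F, ∃ x : ℕ → E,
    (∀ k, t k ∈ B) ∧ Filter.Tendsto t Filter.atTop (nhds lam) ∧
    (∀ k, x k ∈ M ∩ p ⁻¹' {t k}) ∧
    ∀ K : Set E, IsCompact K →
      ∀ᶠ k in Filter.atTop, connectedComponentIn (M ∩ p ⁻¹' {t k}) (x k) ∩ K = ∅

/-- `Φ` and `Ψ` give mutually inverse continuous maps between `S` and `T`,
i.e. a homeomorphism between `S` and `T`. -/
def IsHomeoOn {E F : Type} [TopologicalSpace E] [TopologicalSpace F]
    (Φ : E → F) (Ψ : F → E) (S : Set E) (T : Set F) : Prop :=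
  ContinuousOn Φ S ∧ ContinuousOn Ψ T ∧ Set.MapsTo Φ S T ∧ Set.MapsTo Ψ T S ∧
    Set.LeftInvOn Ψ Φ S ∧ Set.RightInvOn Ψ Φ T

/-- The Euler characteristic `b₀ - b₁` of the fibre of `p : M → ·` over `t`
(the fibres under consideration are open curves, with no homology in degrees ≥ 2). -/
def eulerCharOn {E F : Type} [TopologicalSpace E] (p : E → F) (M : Set E) (t : F) : ℤ :=
  (bettiNumber ↥(M ∩ p ⁻¹' {t}) 0 : ℤ) - (bettiNumber ↥(M ∩ p ⁻¹' {t}) 1 : ℤ)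



lemma line_eq_range (d : ℂ) : {q : ℂ × ℂ × ℂ | q.1 = 0 ∧ q.2.1 = d} =
    Set.range (fun z : ℂ => ((0, d, z) : ℂ × ℂ × ℂ)) := by
  ext ⟨x, y, z⟩
  constructor
  · rintro ⟨rfl, rfl⟩; exact ⟨z, rfl⟩
  · rintro ⟨w, hw⟩; simp [Prod.ext_iff] at hw; exact ⟨hw.1.symm, hw.2.1.symm⟩

lemma line_preconnected (d : ℂ) : IsPreconnected {q : ℂ × ℂ × ℂ | q.1 = 0 ∧ q.2.1 = d} := by
  rw [line_eq_range]
  exact isPreconnected_range (by continuity)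

lemma comp_eq_line {S : Set (ℂ × ℂ × ℂ)} {d d' : ℂ} (hdd : d ≠ d')
    (hS : S = {q : ℂ × ℂ × ℂ | q.1 = 0 ∧ q.2.1 = d} ∪ {q : ℂ × ℂ × ℂ | q.1 = 0 ∧ q.2.1 = d'})
    {q : ℂ × ℂ × ℂ} (hq : q ∈ {q : ℂ × ℂ × ℂ | q.1 = 0 ∧ q.2.1 = d}) :
    connectedComponentIn S q = {q : ℂ × ℂ × ℂ | q.1 = 0 ∧ q.2.1 = d} := by
  have hqS : q ∈ S := by rw [hS]; exact Or.inl hq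
  apply Set.Subset.antisymm
  · set U : Set (ℂ × ℂ × ℂ) := {x | dist x.2.1 d < dist x.2.1 d'} with hU
    set V : Set (ℂ × ℂ × ℂ) := {x | dist x.2.1 d' < dist x.2.1 d} with hV
    have hUo : IsOpen U := isOpen_lt (by fun_prop) (by fun_prop)
    have hVo : IsOpen V := isOpen_lt (by fun_prop) (by fun_prop)
    have hdisj : Disjoint U V := by
      rw [Set.disjoint_left]
      intro x hx
      have hx' : dist x.2.1 d < dist x.2.1 d' := hx
      exact fun h : dist x.2.1 d' < dist x.2.1 d => absurd h (lt_asymm hx')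
    have hdpos : (0 : ℝ) < dist d d' := dist_pos.2 hdd
    have hSUV : S ⊆ U ∪ V := by
      rw [hS]
      rintro x (⟨_, hx2⟩ | ⟨_, hx2⟩)
      · left; simp [hU, hx2, dist_pos.2 hdd]
      · right; simp [hV, hx2, dist_pos.2 hdd.symm]
    have hsub : connectedComponentIn S q ⊆ U :=
      (isPreconnected_connectedComponentIn).subset_left_of_subset_union hUo hVo hdisj
        ((connectedComponentIn_subset S q).trans hSUV)
        ⟨q, mem_connectedComponentIn hqS, by simp [hU, hq.2, dist_pos.2 hdd]⟩
    intro x hx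
    have hxS : x ∈ S := connectedComponentIn_subset S q hx
    have hxU : x ∈ U := hsub hx
    rw [hS] at hxS
    rcases hxS with h | h
    · exact h
    · exfalso
      rw [hU] at hxU
      simp [h.2] at hxU
      exact absurd hxU (not_lt.2 dist_nonneg)
  · exact (line_preconnected d).subset_connectedComponentIn hq
      (by rw [hS]; exact Set.subset_union_left)

/-- For `F(x,y,z) = (x, [(x−1)(xz+y²)+1]·[x(xz+y²)−1])` and `b ≠ −1`,
the fibre `F⁻¹(0,b)` equals `{(0,d,z) : d² = 1+b}`, the union of the two disjoint
complex lines `{(0,dᵢ)} × ℂ` where `d₁ ≠ d₂` are the square roots of `1+b`; these are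
its two connected components, each biholomorphic to `ℂ` via `z ↦ (0,dᵢ,z)`. -/
theorem statement13 (F : ℂ × ℂ × ℂ → ℂ × ℂ)
    (hF : F = fun q => (q.1, ((q.1 - 1) * (q.1 * q.2.2 + q.2.1 ^ 2) + 1) *
      (q.1 * (q.1 * q.2.2 + q.2.1 ^ 2) - 1))) :
    ∀ b : ℂ, b ≠ -1 →
      F ⁻¹' {((0 : ℂ), b)} = {q : ℂ × ℂ × ℂ | q.1 = 0 ∧ q.2.1 ^ 2 = 1 + b} ∧
      ∃ d₁ d₂ : ℂ, d₁ ≠ d₂ ∧ d₁ ^ 2 = 1 + b ∧ d₂ ^ 2 = 1 + b ∧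
        F ⁻¹' {((0 : ℂ), b)} =
          {q : ℂ × ℂ × ℂ | q.1 = 0 ∧ q.2.1 = d₁} ∪
          {q : ℂ × ℂ × ℂ | q.1 = 0 ∧ q.2.1 = d₂} ∧
        Disjoint {q : ℂ × ℂ × ℂ | q.1 = 0 ∧ q.2.1 = d₁}
          {q : ℂ × ℂ × ℂ | q.1 = 0 ∧ q.2.1 = d₂} ∧
        ∀ d ∈ ({d₁, d₂} : Set ℂ),
          (∀ q ∈ {q : ℂ × ℂ × ℂ | q.1 = 0 ∧ q.2.1 = d},
            connectedComponentIn (F ⁻¹' {((0 : ℂ), b)}) q =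
              {q : ℂ × ℂ × ℂ | q.1 = 0 ∧ q.2.1 = d}) ∧
          Differentiable ℂ (fun z : ℂ => ((0, d, z) : ℂ × ℂ × ℂ)) ∧
          Function.Injective (fun z : ℂ => ((0, d, z) : ℂ × ℂ × ℂ)) ∧
          Set.range (fun z : ℂ => ((0, d, z) : ℂ × ℂ × ℂ)) =
            {q : ℂ × ℂ × ℂ | q.1 = 0 ∧ q.2.1 = d} ∧
          ∀ z : ℂ, (((0 : ℂ), d, z) : ℂ × ℂ × ℂ).2.2 = z := by
  intro b hb
  have hb1 : (1 : ℂ) + b ≠ 0 := fun h => hb (by linear_combination h)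
  have hfib : F ⁻¹' {((0 : ℂ), b)} = {q : ℂ × ℂ × ℂ | q.1 = 0 ∧ q.2.1 ^ 2 = 1 + b} := by
    ext ⟨x, y, z⟩
    simp only [hF, Set.mem_preimage, Set.mem_singleton_iff, Prod.mk.injEq, Set.mem_setOf_eq]
    constructor
    · rintro ⟨rfl, h⟩
      exact ⟨rfl, by linear_combination h⟩
    · rintro ⟨rfl, h⟩
      exact ⟨rfl, by linear_combination h⟩
  obtain ⟨d, hd⟩ := IsAlgClosed.exists_pow_nat_eq (k := ℂ) (1 + b) (n := 2) (by norm_num)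
  have hd0 : d ≠ 0 := fun h => hb1 (by rw [← hd, h]; ring)
  have hdd : d ≠ -d := fun h => hd0 (by
    have h2 : (2 : ℂ) * d = 0 := by linear_combination h
    have : (2 : ℂ) ≠ 0 := two_ne_zero
    exact (mul_eq_zero.1 h2).resolve_left this)
  have hunion : F ⁻¹' {((0 : ℂ), b)} =
      {q : ℂ × ℂ × ℂ | q.1 = 0 ∧ q.2.1 = d} ∪ {q : ℂ × ℂ × ℂ | q.1 = 0 ∧ q.2.1 = -d} := by
    rw [hfib]
    ext ⟨x, y, z⟩
    simp only [Set.mem_setOf_eq, Set.mem_union]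
    constructor
    · rintro ⟨rfl, h⟩
      have h2 : (y - d) * (y + d) = 0 := by linear_combination h - hd
      rcases mul_eq_zero.1 h2 with h3 | h3
      · exact Or.inl ⟨rfl, sub_eq_zero.1 h3⟩
      · exact Or.inr ⟨rfl, eq_neg_of_add_eq_zero_left h3⟩
    · rintro (⟨rfl, rfl⟩ | ⟨rfl, rfl⟩)
      · exact ⟨rfl, hd⟩
      · exact ⟨rfl, by linear_combination hd⟩
  refine ⟨hfib, d, -d, hdd, hd, by linear_combination hd, hunion, ?_, ?_⟩
  · rw [Set.disjoint_left]
    rintro ⟨x, y, z⟩ ⟨_, rfl⟩ ⟨_, h2⟩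
    exact hdd h2
  · intro e he
    have hkey : ∀ q ∈ {q : ℂ × ℂ × ℂ | q.1 = 0 ∧ q.2.1 = e},
        connectedComponentIn (F ⁻¹' {((0 : ℂ), b)}) q =
          {q : ℂ × ℂ × ℂ | q.1 = 0 ∧ q.2.1 = e} := by
      rcases he with rfl | he
      · exact fun q hq => comp_eq_line hdd hunion hq
      · simp only [Set.mem_singleton_iff] at he
        subst he
        exact fun q hq => comp_eq_line (Ne.symm hdd) (by rw [hunion, Set.union_comm]) hq
    refine ⟨hkey, ?_, ?_, (line_eq_range e).symm, fun z => rfl⟩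
    · exact (differentiable_const _).prodMk ((differentiable_const _).prodMk differentiable_id)
    · intro a c h
      simpa using congrArg (fun q : ℂ × ℂ × ℂ => q.2.2) h


end
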